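/- Let (L, P) be a complete flag of V that is in general position with every φ-stable complete flag of V. Then there exist nonzero scalars c₁, c₂, c₃ ∈ E and a scalar a ∈ E with a ≠ 0 and a ≠ 1 such that P = span_E{c₁·e₁ + c₂·e₂, c₁·e₁ + a·c₂·e₂ + c₃·e₃} and L = span_E{c₁·e₁ + a·c₂·e₂ + c₃·e₃}. (After multiplying the Frobenius eigenvectors by suitable nonzero scalars, the Hodge filtration of a non-critical crystalline representation takes the explicit normal form of equation (1.1) of the paper, for some Hodge parameter a.) -/

import Mathlib

open Submodule

noncomputable section

variable (E : Type*) [Field E]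

/-- The ambient 3-dimensional space `V = E³`. -/
abbrev V3 (E : Type*) [Field E] := Fin 3 → E

/-- The standard basis vectors `e₁, e₂, e₃` (indexed by `0, 1, 2`). -/
def e3 (i : Fin 3) : V3 E := Pi.single i 1

/-- The diagonal endomorphism `φ` with `φ(eᵢ) = αᵢ • eᵢ`. -/
def phi3 (α : Fin 3 → E) : V3 E →ₗ[E] V3 E where
  toFun v := fun i => α i * v i
  map_add' u v := by funext i; simp [mul_add]
  map_smul' c v := by funext i; simp [smul_eq_mul]; ring

/-- The line `L_a = span{e₁ + a•e₂ + e₃}`. -/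
def La (a : E) : Submodule E (V3 E) :=
  span E {e3 E 0 + a • e3 E 1 + e3 E 2}

/-- The plane `P_a = span{e₁ + e₂, e₁ + a•e₂ + e₃}`. -/
def Pa (a : E) : Submodule E (V3 E) :=
  span E {e3 E 0 + e3 E 1, e3 E 0 + a • e3 E 1 + e3 E 2}

/-- `(F¹, F²)` is a complete flag: `F¹ ⊆ F²` with `dim F¹ = 1`, `dim F² = 2`. -/
def IsCompleteFlag (F1 F2 : Submodule E (V3 E)) : Prop :=
  F1 ≤ F2 ∧ Module.finrank E ↥F1 = 1 ∧ Module.finrank E ↥F2 = 2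

/-- The flag `(F¹, F²)` is stable under `φ`. -/
def PhiStable (α : Fin 3 → E) (F1 F2 : Submodule E (V3 E)) : Prop :=
  F1.map (phi3 E α) ≤ F1 ∧ F2.map (phi3 E α) ≤ F2

/-- Two complete flags `(F¹, F²)` and `(G¹, G²)` are in general position:
`dim (Fⁱ ⊓ Gʲ) = max 0 (i + j - 3)` for `i, j ∈ {1, 2}`. -/
def GenPos (F1 F2 G1 G2 : Submodule E (V3 E)) : Prop :=
  Module.finrank E ↥(F1 ⊓ G1) = 0 ∧ Module.finrank E ↥(F1 ⊓ G2) = 0 ∧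
  Module.finrank E ↥(F2 ⊓ G1) = 0 ∧ Module.finrank E ↥(F2 ⊓ G2) = 1

/- ----- auxiliary lemmas ----- -/

lemma e3_ne_zero (i : Fin 3) : e3 E i ≠ 0 := by
  intro h
  have := congrFun h i
  simp [e3] at this

lemma li_e3 (i j : Fin 3) (hij : i ≠ j) : LinearIndependent E ![e3 E i, e3 E j] := by
  rw [LinearIndependent.pair_iff]
  intro s t hst
  constructor
  · have := congrFun hst i
    simpa [e3, Pi.single_apply, hij, hij.symm] using this
  · have := congrFun hst j
    simpa [e3, Pi.single_apply, hij, hij.symm] using this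

lemma span_pair_finrank {x y : V3 E} (h : LinearIndependent E ![x, y]) :
    Module.finrank E ↥(span E {x, y}) = 2 := by
  have hr : ({x, y} : Set (V3 E)) = Set.range ![x, y] := by
    ext z; simp [Fin.exists_fin_two, or_comm]
  rw [hr, finrank_span_eq_card h]
  simp

lemma rank_one_gen (L : Submodule E (V3 E)) (h : Module.finrank E ↥L = 1) :
    ∃ v : V3 E, v ≠ 0 ∧ v ∈ L ∧ L = span E {v} := by
  obtain ⟨v, hv0, hv⟩ := finrank_eq_one_iff'.mp h
  refine ⟨v, ?_, v.2, ?_⟩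
  · intro h0; apply hv0; exact Subtype.ext (by simp [h0])
  · apply le_antisymm
    · intro x hx
      obtain ⟨c, hc⟩ := hv ⟨x, hx⟩
      have hc' : c • (v : V3 E) = x := congrArg Subtype.val hc
      rw [← hc']; exact smul_mem _ _ (subset_span rfl)
    · rw [span_le, Set.singleton_subset_iff]; exact v.2

lemma phi3_e3 (α : Fin 3 → E) (i : Fin 3) : phi3 E α (e3 E i) = α i • e3 E i := by
  funext j
  rcases eq_or_ne j i with h | h <;>
    simp [phi3, e3, Pi.single_apply, h]

theorem stmt2 (α : Fin 3 → E) (hα0 : ∀ i, α i ≠ 0) (hα : Function.Injective α)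
    (L P : Submodule E (V3 E)) (hLP : IsCompleteFlag E L P)
    (hgen : ∀ F1 F2 : Submodule E (V3 E), IsCompleteFlag E F1 F2 → PhiStable E α F1 F2 →
      GenPos E L P F1 F2) :
    ∃ c1 c2 c3 a : E, c1 ≠ 0 ∧ c2 ≠ 0 ∧ c3 ≠ 0 ∧ a ≠ 0 ∧ a ≠ 1 ∧
      P = span E {c1 • e3 E 0 + c2 • e3 E 1,
                  c1 • e3 E 0 + (a * c2) • e3 E 1 + c3 • e3 E 2} ∧
      L = span E {c1 • e3 E 0 + (a * c2) • e3 E 1 + c3 • e3 E 2} := by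
  classical
  obtain ⟨hLsub, hL1, hP2⟩ := hLP
  have flag : ∀ i j : Fin 3, i ≠ j →
      IsCompleteFlag E (span E {e3 E i}) (span E {e3 E i, e3 E j}) := by
    intro i j hij
    refine ⟨span_mono ?_, finrank_span_singleton (e3_ne_zero E i),
      span_pair_finrank E (li_e3 E i j hij)⟩
    intro z hz; simp only [Set.mem_singleton_iff] at hz; simp [hz]
  have stab : ∀ i j : Fin 3, PhiStable E α (span E {e3 E i}) (span E {e3 E i, e3 E j}) := by
    intro i j
    constructor <;> rw [Submodule.map_span_le] <;> intro m hm
    · simp only [Set.mem_singleton_iff] at hm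
      subst hm; rw [phi3_e3]
      exact smul_mem _ _ (subset_span rfl)
    · simp only [Set.mem_insert_iff, Set.mem_singleton_iff] at hm
      rcases hm with rfl | rfl <;> rw [phi3_e3] <;>
        exact smul_mem _ _ (subset_span (by simp))
  obtain ⟨-, hL01, hPe0, hPP01⟩ := hgen _ _ (flag 0 1 (by decide)) (stab 0 1)
  obtain ⟨-, hL12, hPe1, -⟩ := hgen _ _ (flag 1 2 (by decide)) (stab 1 2)
  obtain ⟨-, hL20, hPe2, -⟩ := hgen _ _ (flag 2 0 (by decide)) (stab 2 0)
  have bL01 : L ⊓ span E {e3 E 0, e3 E 1} = ⊥ := Submodule.finrank_eq_zero.mp hL01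
  have bL12 : L ⊓ span E {e3 E 1, e3 E 2} = ⊥ := Submodule.finrank_eq_zero.mp hL12
  have bL20 : L ⊓ span E {e3 E 2, e3 E 0} = ⊥ := Submodule.finrank_eq_zero.mp hL20
  have hbot : ∀ i : Fin 3, P ⊓ span E {e3 E i} = ⊥ := by
    intro i
    fin_cases i
    · exact Submodule.finrank_eq_zero.mp hPe0
    · exact Submodule.finrank_eq_zero.mp hPe1
    · exact Submodule.finrank_eq_zero.mp hPe2
  have heP : ∀ i : Fin 3, e3 E i ∉ P := by
    intro i hi
    have hm : e3 E i ∈ (⊥ : Submodule E (V3 E)) :=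
      (hbot i) ▸ (⟨hi, subset_span rfl⟩ : e3 E i ∈ P ⊓ span E {e3 E i})
    exact e3_ne_zero E i (by simpa using hm)
  obtain ⟨v, hv0, hvL, hLspan⟩ := rank_one_gen E L hL1
  -- coordinates of v are nonzero
  have hv2 : v 2 ≠ 0 := by
    intro h2
    apply hv0
    have hvplane : v ∈ span E {e3 E 0, e3 E 1} :=
      Submodule.mem_span_pair.mpr ⟨v 0, v 1, by
        funext k; fin_cases k <;> simp [e3, Pi.single_apply, h2]⟩
    have : v ∈ (⊥ : Submodule E (V3 E)) := bL01 ▸ (⟨hvL, hvplane⟩ : v ∈ L ⊓ _)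
    simpa using this
  have hvz0 : v 0 ≠ 0 := by
    intro h0
    apply hv0
    have hvplane : v ∈ span E {e3 E 1, e3 E 2} :=
      Submodule.mem_span_pair.mpr ⟨v 1, v 2, by
        funext k; fin_cases k <;> simp [e3, Pi.single_apply, h0]⟩
    have : v ∈ (⊥ : Submodule E (V3 E)) := bL12 ▸ (⟨hvL, hvplane⟩ : v ∈ L ⊓ _)
    simpa using this
  have hv1 : v 1 ≠ 0 := by
    intro h1
    apply hv0
    have hvplane : v ∈ span E {e3 E 2, e3 E 0} :=
      Submodule.mem_span_pair.mpr ⟨v 2, v 0, by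
        funext k; fin_cases k <;> simp [e3, Pi.single_apply, h1]⟩
    have : v ∈ (⊥ : Submodule E (V3 E)) := bL20 ▸ (⟨hvL, hvplane⟩ : v ∈ L ⊓ _)
    simpa using this
  -- a nonzero vector u in P ∩ span{e0, e1}
  have hne : P ⊓ span E {e3 E 0, e3 E 1} ≠ ⊥ := by
    intro hb
    rw [hb] at hPP01
    simp at hPP01
  obtain ⟨u, humem, hu0⟩ := Submodule.exists_mem_ne_zero_of_ne_bot hne
  obtain ⟨huP, huplane⟩ := humem
  obtain ⟨x, y, hxy⟩ := Submodule.mem_span_pair.mp huplane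
  have hu0c : u 0 = x := by
    have := congrFun hxy 0; simpa [e3, Pi.single_apply] using this.symm
  have hu1c : u 1 = y := by
    have := congrFun hxy 1; simpa [e3, Pi.single_apply] using this.symm
  have hu2c : u 2 = 0 := by
    have := congrFun hxy 2; simpa [e3, Pi.single_apply] using this.symm
  have hx : x ≠ 0 := by
    intro hx0
    apply heP 1
    have hy : y ≠ 0 := by
      intro hy0; apply hu0; rw [← hxy, hx0, hy0]; simp
    have hu : u = y • e3 E 1 := by rw [← hxy, hx0]; simp
    have he : e3 E 1 = y⁻¹ • u := by
      rw [hu, smul_smul, inv_mul_cancel₀ hy, one_smul]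
    rw [he]; exact smul_mem _ _ huP
  have hy : y ≠ 0 := by
    intro hy0
    apply heP 0
    have hu : u = x • e3 E 0 := by rw [← hxy, hy0]; simp
    have he : e3 E 0 = x⁻¹ • u := by
      rw [hu, smul_smul, inv_mul_cancel₀ hx, one_smul]
    rw [he]; exact smul_mem _ _ huP
  -- set up the constants
  set c2 : E := v 0 * y / x with hc2def
  have hc2 : c2 ≠ 0 := div_ne_zero (mul_ne_zero hvz0 hy) hx
  set a : E := v 1 / c2 with hadef
  have ha0 : a ≠ 0 := div_ne_zero hv1 hc2
  have hac : a * c2 = v 1 := div_mul_cancel₀ _ hc2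
  -- key vector identities
  have hw2 : v 0 • e3 E 0 + (a * c2) • e3 E 1 + v 2 • e3 E 2 = v := by
    funext k
    fin_cases k <;> simp [e3, Pi.single_apply, hac]
  have hw1 : v 0 • e3 E 0 + c2 • e3 E 1 = (v 0 / x) • u := by
    funext k
    fin_cases k <;>
      simp [e3, Pi.single_apply, hu0c, hu1c, hu2c, hc2def] <;> field_simp
  have ha1 : a ≠ 1 := by
    intro h1
    apply heP 2
    have hv1c : v 1 = c2 := by
      have := hac; rw [h1, one_mul] at this; exact this.symm
    have hmem : v - (v 0 / x) • u ∈ P := sub_mem (hLsub hvL) (smul_mem _ _ huP)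
    have hval : v - (v 0 / x) • u = v 2 • e3 E 2 := by
      funext k
      fin_cases k <;>
        simp [e3, Pi.single_apply, hu0c, hu1c, hu2c, hv1c, hc2def] <;> field_simp <;> simp
    have he : e3 E 2 = (v 2)⁻¹ • (v - (v 0 / x) • u) := by
      rw [hval, smul_smul, inv_mul_cancel₀ hv2, one_smul]
    rw [he]; exact smul_mem _ _ hmem
  refine ⟨v 0, c2, v 2, a, hvz0, hc2, hv2, ha0, ha1, ?_, ?_⟩
  · -- P
    rw [hw1, hw2]
    have hli : LinearIndependent E ![(v 0 / x) • u, v] := by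
      rw [LinearIndependent.pair_iff]
      intro s t hst
      have h2 := congrFun hst 2
      simp [hu2c] at h2
      have ht : t = 0 := h2.resolve_right hv2
      have h0 := congrFun hst 0
      simp [hu0c, ht] at h0
      rcases h0 with h | h
      · exact ⟨h, ht⟩
      · rcases h with h | h
        · exact absurd h hvz0
        · exact absurd h hx
    have hle : span E {(v 0 / x) • u, v} ≤ P := by
      rw [span_le]
      intro z hz
      simp only [Set.mem_insert_iff, Set.mem_singleton_iff] at hz
      rcases hz with rfl | rfl
      · exact smul_mem _ _ huP
      · exact hLsub hvL
    exact (eq_of_le_of_finrank_le hle (by rw [hP2, span_pair_finrank E hli])).symm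
  · -- L
    rw [hw2]; exact hLspan
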